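/- arXiv:1801.00523 — 2 statements merged into one kernel-verified Lean document; each statement's English description precedes it below -/
import Mathlib

section
/- (Theorem 3, asymptotic variance of the squared IQR ratio.) Let p ∈ (0,1/2). Let X be a real random variable with ℙ(X ≤ x_p) = p and ℙ(X ≤ x_{1-p}) = 1-p for constants x_p < x_{1-p}, and Y a real random variable with ℙ(Y ≤ y_p) = p and ℙ(Y ≤ y_{1-p}) = 1-p for constants y_p < y_{1-p}. Let g₁(p), g₁(1-p), g₂(p), g₂(1-p) > 0 be constants, w₁, w₂ > 0, and R_p = [(x_{1-p} - x_p)/(y_{1-p} - y_p)]². Define PIF₁(x) = (2R_p/(x_{1-p} - x_p))·[ ((1-p) - 1{x ≤ x_{1-p}})g₁(1-p) - (p - 1{x ≤ x_p})g₁(p) ] and PIF₂(y) = -(2R_p/(y_{1-p} - y_p))·[ ((1-p) - 1{y ≤ y_{1-p}})g₂(1-p) - (p - 1{y ≤ y_p})g₂(p) ]. Then (1/w₁)E[PIF₁(X)²] + (1/w₂)E[PIF₂(Y)²] = 4pR_p²·{ [g₁(p)² + g₁(1-p)² - p(g₁(p) + g₁(1-p))²]/(w₁(x_{1-p} - x_p)²)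 + [g₂(p)² + g₂(1-p)² - p(g₂(p) + g₂(1-p))²]/(w₂(y_{1-p} - y_p)²) }. -/
open MeasureTheory Set

lemma integral_two_step {Ω : Type*} [MeasurableSpace Ω] (P : Measure Ω)
    [IsProbabilityMeasure P] (X : Ω → ℝ) (hX : Measurable X)
    (a b : ℝ) (hab : a ≤ b) (v₁ v₂ v₃ : ℝ) :
    ∫ ω, (if X ω ≤ a then v₁ else if X ω ≤ b then v₂ else v₃) ∂P
      = v₃ + (v₂ - v₃) * (P {ω | X ω ≤ b}).toReal
        + (v₁ - v₂) * (P {ω | X ω ≤ a}).toReal := by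
  have hsa : MeasurableSet {ω | X ω ≤ a} := measurableSet_le hX measurable_const
  have hsb : MeasurableSet {ω | X ω ≤ b} := measurableSet_le hX measurable_const
  have heq : (fun ω => if X ω ≤ a then v₁ else if X ω ≤ b then v₂ else v₃)
      = fun ω => v₃ + ({ω | X ω ≤ b}.indicator (fun _ => v₂ - v₃) ω
          + {ω | X ω ≤ a}.indicator (fun _ => v₁ - v₂) ω) := by
    funext ω
    simp only [Set.indicator_apply, Set.mem_setOf_eq]
    split_ifs with h1 h2 h3
    · ring
    · exact absurd (h1.trans hab) h2
    · ring
    · ring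
  have i1 : Integrable (fun ω => {ω | X ω ≤ b}.indicator (fun _ => v₂ - v₃) ω) P :=
    (integrable_const _).indicator hsb
  have i2 : Integrable (fun ω => {ω | X ω ≤ a}.indicator (fun _ => v₁ - v₂) ω) P :=
    (integrable_const _).indicator hsa
  have i12 : Integrable (fun ω => {ω | X ω ≤ b}.indicator (fun _ => v₂ - v₃) ω
      + {ω | X ω ≤ a}.indicator (fun _ => v₁ - v₂) ω) P := i1.add i2
  rw [heq, integral_add (integrable_const v₃) i12, integral_add i1 i2,
    integral_const, integral_indicator_const _ hsb, integral_indicator_const _ hsa]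
  simp only [smul_eq_mul, measureReal_def, measure_univ, ENNReal.toReal_one, one_mul]
  ring

/-- General single-sample computation: the second moment of a PIF-type
function built from two indicators. -/
lemma pif_second_moment {Ω : Type*} [MeasurableSpace Ω] (P : Measure Ω)
    [IsProbabilityMeasure P] (X : Ω → ℝ) (hX : Measurable X)
    (a b : ℝ) (hab : a ≤ b) (p K g g' : ℝ)
    (hPa : (P {ω | X ω ≤ a}).toReal = p)
    (hPb : (P {ω | X ω ≤ b}).toReal = 1 - p) :
    ∫ ω, (K * (((1 - p) - (if X ω ≤ b then (1 : ℝ) else 0)) * g'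
        - (p - (if X ω ≤ a then (1 : ℝ) else 0)) * g)) ^ 2 ∂P
      = K ^ 2 * p * (g ^ 2 + g' ^ 2 - p * (g + g') ^ 2) := by
  set v₁ : ℝ := (K * (((1 - p) - 1) * g' - (p - 1) * g)) ^ 2 with hv₁
  set v₂ : ℝ := (K * (((1 - p) - 1) * g' - p * g)) ^ 2 with hv₂
  set v₃ : ℝ := (K * ((1 - p) * g' - p * g)) ^ 2 with hv₃
  have hcongr : ∫ ω, (K * (((1 - p) - (if X ω ≤ b then (1 : ℝ) else 0)) * g'
        - (p - (if X ω ≤ a then (1 : ℝ) else 0)) * g)) ^ 2 ∂P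
      = ∫ ω, (if X ω ≤ a then v₁ else if X ω ≤ b then v₂ else v₃) ∂P := by
    apply integral_congr_ae
    filter_upwards with ω
    split_ifs with h1 h2 h3
    · rw [hv₁]
    · rw [hv₂]; ring
    · exact absurd (h3.trans hab) h1
    · rw [hv₃]; ring
  rw [hcongr, integral_two_step P X hX a b hab v₁ v₂ v₃, hPa, hPb, hv₁, hv₂, hv₃]
  ring

/-- Theorem 3 (asymptotic variance of the squared IQR ratio):
`(1/w₁) E[PIF₁(X)²] + (1/w₂) E[PIF₂(Y)²]` equals
`4 p R_p² { [g₁(p)² + g₁(1-p)² - p(g₁(p)+g₁(1-p))²]/(w₁ (x_{1-p}-x_p)²)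
          + [g₂(p)² + g₂(1-p)² - p(g₂(p)+g₂(1-p))²]/(w₂ (y_{1-p}-y_p)²) }`. -/
theorem ASV_squared_IQR_ratio
    {Ω₁ Ω₂ : Type*} [MeasurableSpace Ω₁] [MeasurableSpace Ω₂]
    (P₁ : Measure Ω₁) (P₂ : Measure Ω₂)
    [IsProbabilityMeasure P₁] [IsProbabilityMeasure P₂]
    (p : ℝ) (hp : p ∈ Set.Ioo (0 : ℝ) (1 / 2))
    (X : Ω₁ → ℝ) (Y : Ω₂ → ℝ) (hX : Measurable X) (hY : Measurable Y)
    (x_p x_1p y_p y_1p : ℝ) (hx : x_p < x_1p) (hy : y_p < y_1p)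
    (hXp : (P₁ {ω | X ω ≤ x_p}).toReal = p)
    (hX1p : (P₁ {ω | X ω ≤ x_1p}).toReal = 1 - p)
    (hYp : (P₂ {ω | Y ω ≤ y_p}).toReal = p)
    (hY1p : (P₂ {ω | Y ω ≤ y_1p}).toReal = 1 - p)
    (g₁p g₁1p g₂p g₂1p : ℝ)
    (hg₁p : 0 < g₁p) (hg₁1p : 0 < g₁1p) (hg₂p : 0 < g₂p) (hg₂1p : 0 < g₂1p)
    (w₁ w₂ : ℝ) (hw₁ : 0 < w₁) (hw₂ : 0 < w₂)
    (R_p : ℝ) (hR : R_p = ((x_1p - x_p) / (y_1p - y_p)) ^ 2) :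
    (1 / w₁) *
        ∫ ω, (2 * R_p / (x_1p - x_p)
          * (((1 - p) - (if X ω ≤ x_1p then (1 : ℝ) else 0)) * g₁1p
            - (p - (if X ω ≤ x_p then (1 : ℝ) else 0)) * g₁p)) ^ 2 ∂P₁
      + (1 / w₂) *
        ∫ ω, (-(2 * R_p / (y_1p - y_p))
          * (((1 - p) - (if Y ω ≤ y_1p then (1 : ℝ) else 0)) * g₂1p
            - (p - (if Y ω ≤ y_p then (1 : ℝ) else 0)) * g₂p)) ^ 2 ∂P₂
      = 4 * p * R_p ^ 2
        * ((g₁p ^ 2 + g₁1p ^ 2 - p * (g₁p + g₁1p) ^ 2) / (w₁ * (x_1p - x_p) ^ 2)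
          + (g₂p ^ 2 + g₂1p ^ 2 - p * (g₂p + g₂1p) ^ 2) / (w₂ * (y_1p - y_p) ^ 2)) := by
  have hdx : x_1p - x_p ≠ 0 := sub_ne_zero.2 hx.ne'
  have hdy : y_1p - y_p ≠ 0 := sub_ne_zero.2 hy.ne'
  rw [pif_second_moment P₁ X hX x_p x_1p hx.le p (2 * R_p / (x_1p - x_p)) g₁p g₁1p hXp hX1p,
      pif_second_moment P₂ Y hY y_p y_1p hy.le p (-(2 * R_p / (y_1p - y_p))) g₂p g₂1p hYp hY1p]
  field_simp
  ring
end

section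
/- (Second partial influence function of the ratio of variances.) Let μ₂ be a Borel probability measure on ℝ with finite second moment, mean m₂ and variance σ₂² > 0, let σ₁² > 0 be a constant, and fix x₀ ∈ ℝ. For ε ∈ [0,1] let ν_ε = (1-ε)·μ₂ + ε·δ_{x₀}, m_ε = ∫x dν_ε and V₂(ε) = ∫(x - m_ε)² dν_ε. Then the function ε ↦ σ₁²/V₂(ε) has right derivative at ε = 0 equal to -ρ(z₂² - 1), where ρ = σ₁²/σ₂² and z₂ = (x₀ - m₂)/σ₂. -/
open MeasureTheory Set

/-- The contaminated distribution `ν_ε = (1-ε)·μ + ε·δ_{x₀}`. -/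
noncomputable def contamMeasure (μ : Measure ℝ) (x₀ ε : ℝ) : Measure ℝ :=
  ENNReal.ofReal (1 - ε) • μ + ENNReal.ofReal ε • Measure.dirac x₀

lemma integrable_dirac' (f : ℝ → ℝ) (a : ℝ) : Integrable f (Measure.dirac a) := by
  have h : f =ᵐ[Measure.dirac a] fun _ => f a := by
    rw [Filter.EventuallyEq, ae_dirac_eq]
    simp
  exact (integrable_const (f a)).congr h.symm

lemma integral_contam (μ : Measure ℝ) [IsProbabilityMeasure μ] (x₀ : ℝ) {ε : ℝ}
    (hε0 : 0 ≤ ε) (hε1 : ε ≤ 1) (f : ℝ → ℝ) (hf : Integrable f μ) :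
    ∫ x, f x ∂(contamMeasure μ x₀ ε) = (1 - ε) * ∫ x, f x ∂μ + ε * f x₀ := by
  have h1 : Integrable f (ENNReal.ofReal (1 - ε) • μ) :=
    hf.smul_measure ENNReal.ofReal_ne_top
  have h2 : Integrable f (ENNReal.ofReal ε • Measure.dirac x₀) :=
    (integrable_dirac' f x₀).smul_measure ENNReal.ofReal_ne_top
  rw [contamMeasure, integral_add_measure h1 h2, integral_smul_measure,
    integral_smul_measure, integral_dirac, ENNReal.toReal_ofReal hε0,
    ENNReal.toReal_ofReal (by linarith)]
  simp [smul_eq_mul]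

/-- Second partial influence function of the ratio of variances:
`ε ↦ σ₁²/V₂(ε)` has right derivative `-ρ(z₂² - 1)` at `ε = 0`, where
`V₂(ε)` is the variance of the contaminated second distribution, `ρ = σ₁²/σ₂²` and
`z₂ = (x₀ - m₂)/σ₂`. -/
theorem PIF2_ratio_of_variances
    (μ₂ : Measure ℝ) [IsProbabilityMeasure μ₂]
    (hL2 : MemLp (fun x : ℝ => x) 2 μ₂)
    (m₂ : ℝ) (hm₂ : m₂ = ∫ x, x ∂μ₂)
    (σ₁ σ₂ : ℝ) (hσ₁ : 0 < σ₁) (hσ₂ : 0 < σ₂)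
    (hvar₂ : σ₂ ^ 2 = ∫ x, (x - m₂) ^ 2 ∂μ₂)
    (x₀ : ℝ) :
    HasDerivWithinAt
      (fun ε =>
        σ₁ ^ 2 / ∫ x, (x - ∫ y, y ∂(contamMeasure μ₂ x₀ ε)) ^ 2 ∂(contamMeasure μ₂ x₀ ε))
      (-((σ₁ ^ 2 / σ₂ ^ 2) * (((x₀ - m₂) / σ₂) ^ 2 - 1))) (Set.Ici 0) 0 := by
  set d : ℝ := x₀ - m₂ with hd
  set g : ℝ → ℝ := fun ε => σ₁ ^ 2 / ((1 - ε) * (σ₂ ^ 2 + ε * d ^ 2)) with hg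
  have hI1 : Integrable (fun x : ℝ => x) μ₂ := hL2.integrable one_le_two
  -- the key computation: for 0 ≤ ε ≤ 1, the variance of contamMeasure is
  -- (1-ε)(σ₂² + ε d²)
  have key : ∀ ε : ℝ, 0 ≤ ε → ε ≤ 1 →
      (∫ x, (x - ∫ y, y ∂(contamMeasure μ₂ x₀ ε)) ^ 2 ∂(contamMeasure μ₂ x₀ ε))
        = (1 - ε) * (σ₂ ^ 2 + ε * d ^ 2) := by
    intro ε hε0 hε1
    have hmean : (∫ y, y ∂(contamMeasure μ₂ x₀ ε)) = (1 - ε) * m₂ + ε * x₀ := by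
      rw [integral_contam μ₂ x₀ hε0 hε1 _ hI1, hm₂]
    set c : ℝ := (1 - ε) * m₂ + ε * x₀ with hc
    rw [hmean]
    have hint_sq : Integrable (fun x : ℝ => (x - c) ^ 2) μ₂ := by
      have : MemLp (fun x : ℝ => x - c) 2 μ₂ := hL2.sub (memLp_const c)
      simpa using this.integrable_sq
    rw [integral_contam μ₂ x₀ hε0 hε1 _ hint_sq]
    -- compute ∫ (x - c)² dμ₂ = σ₂² + (m₂ - c)²
    have hint_sq₂ : Integrable (fun x : ℝ => (x - m₂) ^ 2) μ₂ := by
      have : MemLp (fun x : ℝ => x - m₂) 2 μ₂ := hL2.sub (memLp_const m₂)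
      simpa using this.integrable_sq
    have hint_lin : Integrable (fun x : ℝ => 2 * (m₂ - c) * (x - m₂)) μ₂ :=
      ((hI1.sub (integrable_const m₂)).const_mul _)
    have hexp : (∫ x, (x - c) ^ 2 ∂μ₂) = σ₂ ^ 2 + (m₂ - c) ^ 2 := by
      have heq : (fun x : ℝ => (x - c) ^ 2)
          = fun x : ℝ => (x - m₂) ^ 2 + (2 * (m₂ - c) * (x - m₂) + (m₂ - c) ^ 2) := by
        funext x; ring
      have hadd : Integrable (fun x : ℝ => 2 * (m₂ - c) * (x - m₂) + (m₂ - c) ^ 2) μ₂ :=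
        hint_lin.add (integrable_const _)
      rw [heq, integral_add hint_sq₂ hadd,
        integral_add hint_lin (integrable_const _), integral_const_mul,
        integral_sub hI1 (integrable_const m₂), integral_const, integral_const]
      simp [← hm₂, ← hvar₂]
    rw [hexp]
    rw [hc]; ring
  -- g has the right derivative
  have hden : HasDerivAt (fun ε : ℝ => (1 - ε) * (σ₂ ^ 2 + ε * d ^ 2))
      ((-1) * (σ₂ ^ 2 + 0 * d ^ 2) + (1 - 0) * (1 * d ^ 2)) 0 := by
    exact ((hasDerivAt_id 0).const_sub 1).mul
      (((hasDerivAt_id 0).mul_const (d ^ 2)).const_add (σ₂ ^ 2))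
  have hden0 : (1 - (0:ℝ)) * (σ₂ ^ 2 + 0 * d ^ 2) ≠ 0 := by
    simp; positivity
  have hσ₂' : σ₂ ≠ 0 := ne_of_gt hσ₂
  have hgderiv : HasDerivAt g (-((σ₁ ^ 2 / σ₂ ^ 2) * ((d / σ₂) ^ 2 - 1))) 0 := by
    have := (hasDerivAt_const (0:ℝ) (σ₁ ^ 2)).div hden hden0
    refine this.congr_deriv ?_
    field_simp
    ring
  -- transfer to the original function via eventual equality on Ici 0
  have hmem : Set.Ico (0:ℝ) 1 ∈ nhdsWithin (0:ℝ) (Set.Ici 0) := by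
    rw [← Set.Iio_inter_Ici (a := (1:ℝ)) (b := (0:ℝ)), Set.inter_comm]
    exact Filter.inter_mem (self_mem_nhdsWithin) (nhdsWithin_le_nhds (Iio_mem_nhds one_pos))
  have heq : (fun ε =>
        σ₁ ^ 2 / ∫ x, (x - ∫ y, y ∂(contamMeasure μ₂ x₀ ε)) ^ 2 ∂(contamMeasure μ₂ x₀ ε))
      =ᶠ[nhdsWithin (0:ℝ) (Set.Ici 0)] g := by
    filter_upwards [hmem] with ε hε
    rw [key ε hε.1 (le_of_lt hε.2)]
  have h0 : (σ₁ ^ 2 / ∫ x, (x - ∫ y, y ∂(contamMeasure μ₂ x₀ (0:ℝ))) ^ 2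
      ∂(contamMeasure μ₂ x₀ (0:ℝ))) = g 0 := by
    rw [key 0 le_rfl zero_le_one]
  exact (hgderiv.hasDerivWithinAt).congr_of_eventuallyEq heq h0
end
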